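/- Let U = (−1,1), let φ : ℝ → [0,1] be twice continuously differentiable, and let C > 0. Let (λⁿ) be a sequence in L∞(U) with λⁿ ≥ 0 a.e., ∫_U λⁿ = 1 and ‖λⁿ‖_{L∞(U)} ≤ C, and let λ ∈ L∞(U) be such that ∫_U λⁿ ξ → ∫_U λ ξ for every ξ ∈ L¹(U). Define Λⁿ(x) = ∫_U φ(y−x)(y−x) λⁿ(y) dy and (Λⁿ)'(x) = −∫_U (φ'(y−x)(y−x) + φ(y−x)) λⁿ(y) dy, and similarly Λ, Λ' from λ. Then Λⁿ → Λ and (Λⁿ)' → Λ' uniformly on [−1,1], i.e. sup_{x∈[−1,1]}|Λⁿ(x) − Λ(x)| → 0 and sup_{x∈[−1,1]}|(Λⁿ)'(x) − Λ'(x)| → 0. -/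

import Mathlib

open MeasureTheory intervalIntegral Filter

/-- Pointwise convergence to zero plus a uniform Lipschitz bound implies uniform
convergence to zero on `[-1,1]`. -/
lemma net_tendstoUniformlyOn_zero (L : ℝ) (hL : 0 ≤ L) (g : ℕ → ℝ → ℝ)
    (hlip : ∀ n, ∀ x ∈ Set.Icc (-1:ℝ) 1, ∀ x' ∈ Set.Icc (-1:ℝ) 1,
      |g n x - g n x'| ≤ L * |x - x'|)
    (hpt : ∀ x ∈ Set.Icc (-1:ℝ) 1, Tendsto (fun n => g n x) atTop (nhds 0)) :
    TendstoUniformlyOn g 0 atTop (Set.Icc (-1:ℝ) 1) := by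
  rw [Metric.tendstoUniformlyOn_iff]
  intro ε hε
  have hδpos : 0 < ε / (2 * (L + 1)) := by positivity
  set δ := ε / (2 * (L + 1)) with hδ
  obtain ⟨t, hts, hcover⟩ := (isCompact_Icc : IsCompact (Set.Icc (-1:ℝ) 1)).elim_nhds_subcover
    (fun x => Metric.ball x δ) (fun x _ => Metric.ball_mem_nhds x hδpos)
  have hev : ∀ᶠ n in atTop, ∀ x ∈ t, |g n x| < ε / 2 := by
    rw [Filter.eventually_all_finset]
    intro x hx
    have hx' : x ∈ Set.Icc (-1:ℝ) 1 := hts x hx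
    have := Metric.tendsto_nhds.mp (hpt x hx') (ε / 2) (by positivity)
    filter_upwards [this] with n hn
    simpa [Real.dist_eq] using hn
  filter_upwards [hev] with n hn y hy
  obtain ⟨x, hxt, hyx⟩ : ∃ x ∈ t, y ∈ Metric.ball x δ := by
    simpa using hcover hy
  have h1 : |g n y - g n x| ≤ L * |y - x| := hlip n y hy x (hts x hxt)
  have h2 : |g n x| < ε / 2 := hn x hxt
  have h3 : |y - x| < δ := by simpa [Real.dist_eq] using hyx
  have h4 : L * |y - x| ≤ L * δ := mul_le_mul_of_nonneg_left h3.le hL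
  have h5 : L * δ < ε / 2 := by
    rw [hδ, mul_comm, div_mul_eq_mul_div, div_lt_div_iff₀ (by positivity) (by norm_num : (0:ℝ) < 2)]
    nlinarith
  have : |g n y| ≤ |g n y - g n x| + |g n x| := by
    calc |g n y| = |(g n y - g n x) + g n x| := by ring_nf
    _ ≤ _ := abs_add_le _ _
  have : |g n y| < ε := by nlinarith
  simpa [Real.dist_eq, dist_comm] using this

/-- Key lemma: for a `C¹` kernel `h`, weak* convergence implies uniform convergence of
`x ↦ ∫ h(y - x) λⁿ(y) dy` on `[-1,1]`. -/
lemma key_uniform (C C₀ : ℝ) (hC : 0 < C) (hC₀ : 0 ≤ C₀)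
    (h : ℝ → ℝ) (hh : ContDiff ℝ 1 h)
    (lam : ℕ → ℝ → ℝ) (lam₀ : ℝ → ℝ)
    (hlam_meas : ∀ n, Measurable (lam n)) (hlam₀_meas : Measurable lam₀)
    (hlam_bdd : ∀ n, ∀ᵐ y ∂(volume.restrict (Set.Ioc (-1:ℝ) 1)), |lam n y| ≤ C)
    (hlam₀_bdd : ∀ᵐ y ∂(volume.restrict (Set.Ioc (-1:ℝ) 1)), |lam₀ y| ≤ C₀)
    (hweak : ∀ ξ : ℝ → ℝ, IntegrableOn ξ (Set.Ioo (-1:ℝ) 1) →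
      Tendsto (fun n => ∫ y in (-1:ℝ)..1, lam n y * ξ y) atTop
        (nhds (∫ y in (-1:ℝ)..1, lam₀ y * ξ y))) :
    TendstoUniformlyOn
      (fun n x => ∫ y in (-1:ℝ)..1, h (y - x) * lam n y)
      (fun x => ∫ y in (-1:ℝ)..1, h (y - x) * lam₀ y)
      atTop (Set.Icc (-1:ℝ) 1) := by
  have hcont : Continuous h := hh.continuous
  -- bound on h on [-2,2]
  obtain ⟨Mh, hMh⟩ : ∃ M, ∀ r ∈ Set.Icc (-2:ℝ) 2, ‖h r‖ ≤ M :=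
    isCompact_Icc.exists_bound_of_continuousOn hcont.continuousOn
  -- bound on deriv h on [-2,2]
  obtain ⟨M, hM⟩ : ∃ M, ∀ r ∈ Set.Icc (-2:ℝ) 2, ‖deriv h r‖ ≤ M :=
    isCompact_Icc.exists_bound_of_continuousOn (hh.continuous_deriv le_rfl).continuousOn
  have hM0 : 0 ≤ M := le_trans (norm_nonneg _) (hM 0 (by norm_num))
  have hMh0 : 0 ≤ Mh := le_trans (norm_nonneg _) (hMh 0 (by norm_num))
  -- membership helper
  have hmem : ∀ x ∈ Set.Icc (-1:ℝ) 1, ∀ y ∈ Set.Ioc (-1:ℝ) 1, y - x ∈ Set.Icc (-2:ℝ) 2 := by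
    intro x hx y hy
    constructor <;> [nlinarith [hx.1, hx.2, hy.1.le, hy.2]; nlinarith [hx.1, hx.2, hy.1.le, hy.2]]
  -- Lipschitz bound on the kernel
  have hlipker : ∀ x ∈ Set.Icc (-1:ℝ) 1, ∀ x' ∈ Set.Icc (-1:ℝ) 1, ∀ y ∈ Set.Ioc (-1:ℝ) 1,
      |h (y - x) - h (y - x')| ≤ M * |x - x'| := by
    intro x hx x' hx' y hy
    have := Convex.norm_image_sub_le_of_norm_deriv_le (f := h) (s := Set.Icc (-2:ℝ) 2)
      (fun r _ => (hh.differentiable one_ne_zero).differentiableAt) hM (convex_Icc _ _)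
      (hmem x' hx' y hy) (hmem x hx y hy)
    have e : (y - x) - (y - x') = x' - x := by ring
    rw [e] at this
    simpa [Real.norm_eq_abs, abs_sub_comm x x'] using this
  -- integrability of the products
  have hII : ∀ (ρ : ℝ → ℝ) (Cρ : ℝ), Measurable ρ →
      (∀ᵐ y ∂(volume.restrict (Set.Ioc (-1:ℝ) 1)), |ρ y| ≤ Cρ) →
      ∀ x ∈ Set.Icc (-1:ℝ) 1,
      IntegrableOn (fun y => h (y - x) * ρ y) (Set.Ioc (-1:ℝ) 1) volume := by
    intro ρ Cρ hρm hρb x hx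
    refine Integrable.mono' (g := fun _ => Mh * Cρ)
      (integrableOn_const (hs := measure_Ioc_lt_top.ne)) ?_ ?_
    · exact ((hcont.comp (continuous_id.sub continuous_const)).measurable.mul
        hρm).aestronglyMeasurable
    · filter_upwards [hρb, ae_restrict_mem measurableSet_Ioc] with y hb hy
      have h1 : ‖h (y - x)‖ ≤ Mh := hMh _ (hmem x hx y hy)
      calc ‖h (y - x) * ρ y‖ = ‖h (y - x)‖ * |ρ y| := by
            simp [Real.norm_eq_abs, abs_mul]
        _ ≤ Mh * Cρ := mul_le_mul h1 hb (abs_nonneg _)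
            hMh0
  have hIIi : ∀ (ρ : ℝ → ℝ) (Cρ : ℝ), Measurable ρ →
      (∀ᵐ y ∂(volume.restrict (Set.Ioc (-1:ℝ) 1)), |ρ y| ≤ Cρ) →
      ∀ x ∈ Set.Icc (-1:ℝ) 1,
      IntervalIntegrable (fun y => h (y - x) * ρ y) volume (-1) 1 := by
    intro ρ Cρ hρm hρb x hx
    rw [intervalIntegrable_iff, Set.uIoc_of_le (by norm_num : (-1:ℝ) ≤ 1)]
    exact hII ρ Cρ hρm hρb x hx
  -- Lipschitz bound for each integral functional
  have hlipInt : ∀ (ρ : ℝ → ℝ) (Cρ : ℝ), 0 ≤ Cρ → Measurable ρ →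
      (∀ᵐ y ∂(volume.restrict (Set.Ioc (-1:ℝ) 1)), |ρ y| ≤ Cρ) →
      ∀ x ∈ Set.Icc (-1:ℝ) 1, ∀ x' ∈ Set.Icc (-1:ℝ) 1,
      |(∫ y in (-1:ℝ)..1, h (y - x) * ρ y) - ∫ y in (-1:ℝ)..1, h (y - x') * ρ y|
        ≤ (2 * M * Cρ) * |x - x'| := by
    intro ρ Cρ hCρ hρm hρb x hx x' hx'
    have hsub : (∫ y in (-1:ℝ)..1, h (y - x) * ρ y) - ∫ y in (-1:ℝ)..1, h (y - x') * ρ y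
        = ∫ y in (-1:ℝ)..1, (h (y - x) - h (y - x')) * ρ y := by
      rw [← intervalIntegral.integral_sub (hIIi ρ Cρ hρm hρb x hx) (hIIi ρ Cρ hρm hρb x' hx')]
      congr 1; ext y; ring
    rw [hsub]
    have hb : ∀ᵐ y ∂(volume.restrict (Set.uIoc (-1:ℝ) 1)),
        ‖(h (y - x) - h (y - x')) * ρ y‖ ≤ (M * |x - x'|) * Cρ := by
      rw [Set.uIoc_of_le (by norm_num : (-1:ℝ) ≤ 1)]
      filter_upwards [hρb, ae_restrict_mem measurableSet_Ioc] with y hbd hy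
      calc ‖(h (y - x) - h (y - x')) * ρ y‖ = |h (y - x) - h (y - x')| * |ρ y| := by
            simp [Real.norm_eq_abs, abs_mul]
        _ ≤ (M * |x - x'|) * Cρ :=
            mul_le_mul (hlipker x hx x' hx' y hy) hbd (abs_nonneg _)
              (by positivity)
    have := intervalIntegral.norm_integral_le_abs_of_norm_le
      (g := fun _ => (M * |x - x'|) * Cρ) hb _root_.intervalIntegrable_const
    rw [intervalIntegral.integral_const] at this
    have e2 : |(1 - (-1:ℝ)) • ((M * |x - x'|) * Cρ)| = 2 * ((M * |x - x'|) * Cρ) := by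
      rw [abs_of_nonneg (by positivity)]
      norm_num
    rw [e2] at this
    calc |(∫ y in (-1:ℝ)..1, (h (y - x) - h (y - x')) * ρ y)|
        ≤ 2 * ((M * |x - x'|) * Cρ) := this
      _ = (2 * M * Cρ) * |x - x'| := by ring
  -- pointwise convergence
  have hpt : ∀ x ∈ Set.Icc (-1:ℝ) 1,
      Tendsto (fun n => (∫ y in (-1:ℝ)..1, h (y - x) * lam n y)
        - ∫ y in (-1:ℝ)..1, h (y - x) * lam₀ y) atTop (nhds 0) := by
    intro x hx
    have hint : IntegrableOn (fun y => h (y - x)) (Set.Ioo (-1:ℝ) 1) volume := by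
      refine Integrable.mono' (g := fun _ => Mh)
        (integrableOn_const (hs := measure_Ioo_lt_top.ne)) ?_ ?_
      · exact (hcont.comp (continuous_id.sub continuous_const)).aestronglyMeasurable
      · filter_upwards [ae_restrict_mem measurableSet_Ioo] with y hy
        exact hMh _ (hmem x hx y (Set.Ioo_subset_Ioc_self hy))
    have hW := hweak (fun y => h (y - x)) hint
    have e : ∀ ρ : ℝ → ℝ, (∫ y in (-1:ℝ)..1, ρ y * h (y - x))
        = ∫ y in (-1:ℝ)..1, h (y - x) * ρ y := by
      intro ρ; apply intervalIntegral.integral_congr; intro y _; exact mul_comm _ _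
    rw [e] at hW
    simp only [e] at hW
    have := hW.sub (tendsto_const_nhds
      (x := ∫ y in (-1:ℝ)..1, h (y - x) * lam₀ y) (f := atTop))
    simpa using this
  -- lam₀'s bound is C₀
  -- assemble
  set L : ℝ := 2 * M * C + 2 * M * C₀ with hL
  have hL0 : 0 ≤ L := by positivity
  have hg := net_tendstoUniformlyOn_zero L hL0
    (fun n x => (∫ y in (-1:ℝ)..1, h (y - x) * lam n y)
        - ∫ y in (-1:ℝ)..1, h (y - x) * lam₀ y)
    (by
      intro n x hx x' hx'
      have h1 := hlipInt (lam n) C hC.le (hlam_meas n) (hlam_bdd n) x hx x' hx'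
      have h2 := hlipInt lam₀ C₀ hC₀ hlam₀_meas hlam₀_bdd x hx x' hx'
      set A := ∫ y in (-1:ℝ)..1, h (y - x) * lam n y
      set A' := ∫ y in (-1:ℝ)..1, h (y - x') * lam n y
      set B := ∫ y in (-1:ℝ)..1, h (y - x) * lam₀ y
      set B' := ∫ y in (-1:ℝ)..1, h (y - x') * lam₀ y
      calc |A - B - (A' - B')| = |(A - A') - (B - B')| := by ring_nf
        _ ≤ |A - A'| + |B - B'| := abs_sub _ _
        _ ≤ 2 * M * C * |x - x'| + 2 * M * C₀ * |x - x'| := add_le_add h1 h2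
        _ = L * |x - x'| := by rw [hL]; ring)
    hpt
  -- convert
  rw [Metric.tendstoUniformlyOn_iff] at hg ⊢
  intro ε hε
  filter_upwards [hg ε hε] with n hn x hx
  have := hn x hx
  simpa [Real.dist_eq, abs_sub_comm] using this

/-- weak* convergence of λⁿ implies uniform convergence of Λⁿ and (Λⁿ)'
on [−1,1]. -/
theorem Lambda_uniform_convergence_of_weakStar
    (C : ℝ) (hC : 0 < C)
    (φ : ℝ → ℝ) (hφ : ContDiff ℝ 2 φ) (hφ01 : ∀ r, φ r ∈ Set.Icc (0:ℝ) 1)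
    (lam : ℕ → ℝ → ℝ) (lam₀ : ℝ → ℝ)
    (hlam_meas : ∀ n, Measurable (lam n)) (hlam₀_meas : Measurable lam₀)
    (hlam_nonneg : ∀ n, ∀ᵐ y ∂(volume.restrict (Set.Ioo (-1:ℝ) 1)), 0 ≤ lam n y)
    (hlam_mass : ∀ n, ∫ y in (-1:ℝ)..1, lam n y = 1)
    (hlam_bdd : ∀ n, ∀ᵐ y ∂(volume.restrict (Set.Ioo (-1:ℝ) 1)), |lam n y| ≤ C)
    (hlam₀_bdd : MemLp lam₀ ⊤ (volume.restrict (Set.Ioo (-1:ℝ) 1)))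
    (hweak : ∀ ξ : ℝ → ℝ, IntegrableOn ξ (Set.Ioo (-1:ℝ) 1) →
      Tendsto (fun n => ∫ y in (-1:ℝ)..1, lam n y * ξ y) atTop
        (nhds (∫ y in (-1:ℝ)..1, lam₀ y * ξ y))) :
    TendstoUniformlyOn
      (fun n x => ∫ y in (-1:ℝ)..1, φ (y - x) * (y - x) * lam n y)
      (fun x => ∫ y in (-1:ℝ)..1, φ (y - x) * (y - x) * lam₀ y)
      atTop (Set.Icc (-1:ℝ) 1) ∧
    TendstoUniformlyOn
      (fun n x => -(∫ y in (-1:ℝ)..1, (deriv φ (y - x) * (y - x) + φ (y - x)) * lam n y))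
      (fun x => -(∫ y in (-1:ℝ)..1, (deriv φ (y - x) * (y - x) + φ (y - x)) * lam₀ y))
      atTop (Set.Icc (-1:ℝ) 1) := by
  have hres : volume.restrict (Set.Ioo (-1:ℝ) 1) = volume.restrict (Set.Ioc (-1:ℝ) 1) :=
    Measure.restrict_congr_set Ioo_ae_eq_Ioc
  have hlam_bdd' : ∀ n, ∀ᵐ y ∂(volume.restrict (Set.Ioc (-1:ℝ) 1)), |lam n y| ≤ C := by
    intro n; rw [← hres]; exact hlam_bdd n
  -- extract a bound C₀ for lam₀
  have hbd : eLpNormEssSup lam₀ (volume.restrict (Set.Ioo (-1:ℝ) 1)) < ⊤ := by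
    have := hlam₀_bdd.2
    rwa [eLpNorm_exponent_top] at this
  obtain ⟨C₀, hC₀bd⟩ := eLpNormEssSup_lt_top_iff_isBoundedUnder.mp hbd
  have hlam₀_bdd' : ∀ᵐ y ∂(volume.restrict (Set.Ioc (-1:ℝ) 1)), |lam₀ y| ≤ (C₀ : ℝ) := by
    rw [← hres]
    filter_upwards [hC₀bd] with y hy
    have := NNReal.coe_le_coe.mpr hy
    rw [coe_nnnorm, Real.norm_eq_abs] at this
    exact this
  have hC₀ : (0:ℝ) ≤ C₀ := C₀.coe_nonneg
  have hderiv : ContDiff ℝ 1 (deriv φ) :=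
    ((contDiff_succ_iff_deriv (n := 1)).mp (by exact_mod_cast hφ)).2.2
  constructor
  · exact key_uniform C C₀ hC hC₀ (fun r => φ r * r)
      ((hφ.of_le one_le_two).mul contDiff_id)
      lam lam₀ hlam_meas hlam₀_meas hlam_bdd' hlam₀_bdd' hweak
  · have := key_uniform C C₀ hC hC₀ (fun r => deriv φ r * r + φ r)
      ((hderiv.mul contDiff_id).add (hφ.of_le one_le_two))
      lam lam₀ hlam_meas hlam₀_meas hlam_bdd' hlam₀_bdd' hweak
    rw [Metric.tendstoUniformlyOn_iff] at this ⊢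
    intro ε hε
    filter_upwards [this ε hε] with n hn x hx
    simpa [dist_neg_neg] using hn x hx
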